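/- Let 𝒳 be a linearly ordered set, let X and X' be finite multisets over 𝒳 with X a sub-multiset of X', let α ∈ (0,1] and q ∈ [0,1], and suppose |X'| ≤ (1 + α/2)·|X|. If x ∈ 𝒳 satisfies q·|X| − (α/2)·|X| ≤ r_max(X, x) ≤ q·|X| + (α/2)·|X| (i.e., x is an (α/2)-approximate q-quantile of X), then q·|X'| − α·|X'| ≤ r_max(X', x) ≤ q·|X'| + α·|X'| (i.e., x is an α-approximate q-quantile of X'). -/
import Mathlib


/-- `rmin X x` is the number of elements of the multiset `X` strictly less than `x`. -/
def rmin {𝒳 : Type*} [LinearOrder 𝒳] (X : Multiset 𝒳) (x : 𝒳) : ℕ :=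
  (X.filter (fun y => y < x)).card

/-- `rmax X x` is the number of elements of the multiset `X` at most `x`. -/
def rmax {𝒳 : Type*} [LinearOrder 𝒳] (X : Multiset 𝒳) (x : 𝒳) : ℕ :=
  (X.filter (fun y => y ≤ x)).card

theorem stmt0 {𝒳 : Type*} [LinearOrder 𝒳] (X X' : Multiset 𝒳) (hsub : X ≤ X')
    (α q : ℝ) (hα0 : 0 < α) (hα1 : α ≤ 1) (hq0 : 0 ≤ q) (hq1 : q ≤ 1)
    (hsize : (X'.card : ℝ) ≤ (1 + α / 2) * X.card)
    (x : 𝒳)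
    (h1 : q * X.card - (α / 2) * X.card ≤ (rmax X x : ℝ))
    (h2 : (rmax X x : ℝ) ≤ q * X.card + (α / 2) * X.card) :
    q * X'.card - α * X'.card ≤ (rmax X' x : ℝ) ∧
      (rmax X' x : ℝ) ≤ q * X'.card + α * X'.card := by
  obtain ⟨Y, rfl⟩ := le_iff_exists_add.mp hsub
  have h3 : (rmax X x : ℝ) ≤ rmax (X + Y) x := by
    have : rmax X x ≤ rmax (X + Y) x := by
      unfold rmax
      rw [Multiset.filter_add, Multiset.card_add]
      omega
    exact_mod_cast this
  have h4 : (rmax (X + Y) x : ℝ) ≤ rmax X x + Y.card := by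
    have : rmax (X + Y) x ≤ rmax X x + Y.card := by
      unfold rmax
      rw [Multiset.filter_add, Multiset.card_add]
      have := Multiset.card_le_card (Multiset.filter_le (fun y => y ≤ x) Y)
      omega
    exact_mod_cast this
  have hc : ((X + Y).card : ℝ) = X.card + Y.card := by
    have := Multiset.card_add X Y
    push_cast [this]; ring
  have hY : (Y.card : ℝ) ≤ (α / 2) * X.card := by
    rw [hc] at hsize; linarith
  have hY0 : (0 : ℝ) ≤ Y.card := Nat.cast_nonneg _
  rw [hc]
  constructor
  · nlinarith [mul_nonneg hq0 hY0, (Nat.cast_nonneg X.card : (0:ℝ) ≤ X.card)]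
  · nlinarith [mul_nonneg hq0 hY0, (Nat.cast_nonneg X.card : (0:ℝ) ≤ X.card)]
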